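/- Let R be a commutative ring, N ≥ 2, z : Fin N → R, and Q : Fin N → Fin N → R a symmetric matrix with Q (N-2) (N-2) = 0, Q (N-1) (N-1) = 0, and with q := Q (N-2) (N-1) a unit of R. Define z' := z (N-2) + q⁻¹ * ∑_{b ≤ N-3} Q b (N-1) * z b and z'' := q * z (N-1) + ∑_{c ≤ N-3} Q (N-2) c * z c. Then ∑_{b,c} z b * z c * Q b c = ∑_{b,c ≤ N-3} z b * z c * (Q b c − q⁻¹ * (Q b (N-1) * Q (N-2) c + Q (N-2) b * Q c (N-1))) + 2 * z' * z''. -/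
import Mathlib


open Finset

/-- Splitting off a hyperbolic plane `2 * z' * z''` from a quadratic form
`∑ z b * z c * Q b c` over a commutative ring, when the off-diagonal entry
`q = Q (N-2) (N-1)` is invertible and the corresponding diagonal entries vanish.
Here `N = n + 2`; the index `N-2` is `(Fin.last n).castSucc` (written via two
`castSucc`s for indices `≤ N-3`), and `N-1` is `Fin.last (n+1)`. -/
theorem hyperbolic_splitting {R : Type*} [CommRing R] (n : ℕ)
    (z : Fin (n + 2) → R) (Q : Fin (n + 2) → Fin (n + 2) → R)
    (hsym : ∀ b c, Q b c = Q c b)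
    (h₁ : Q ((Fin.last n).castSucc) ((Fin.last n).castSucc) = 0)
    (h₂ : Q (Fin.last (n + 1)) (Fin.last (n + 1)) = 0)
    [Invertible (Q ((Fin.last n).castSucc) (Fin.last (n + 1)))] :
    ∑ b : Fin (n + 2), ∑ c : Fin (n + 2), z b * z c * Q b c =
      (∑ b : Fin n, ∑ c : Fin n, z b.castSucc.castSucc * z c.castSucc.castSucc *
        (Q b.castSucc.castSucc c.castSucc.castSucc -
          ⅟ (Q ((Fin.last n).castSucc) (Fin.last (n + 1))) *
            (Q b.castSucc.castSucc (Fin.last (n + 1)) *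
              Q ((Fin.last n).castSucc) c.castSucc.castSucc +
             Q ((Fin.last n).castSucc) b.castSucc.castSucc *
              Q c.castSucc.castSucc (Fin.last (n + 1)))))
      + 2 * (z ((Fin.last n).castSucc) +
              ⅟ (Q ((Fin.last n).castSucc) (Fin.last (n + 1))) *
                ∑ b : Fin n, Q b.castSucc.castSucc (Fin.last (n + 1)) *
                  z b.castSucc.castSucc)
          * (Q ((Fin.last n).castSucc) (Fin.last (n + 1)) * z (Fin.last (n + 1)) +
              ∑ c : Fin n, Q ((Fin.last n).castSucc) c.castSucc.castSucc *
                z c.castSucc.castSucc) := by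
  have e1 : ∀ i : Fin n, Q i.castSucc.castSucc (Fin.last n).castSucc
      = Q (Fin.last n).castSucc i.castSucc.castSucc := fun i => hsym _ _
  have e2 : ∀ i : Fin n, Q (Fin.last (n + 1)) i.castSucc.castSucc
      = Q i.castSucc.castSucc (Fin.last (n + 1)) := fun i => hsym _ _
  have e3 : Q (Fin.last (n + 1)) (Fin.last n).castSucc
      = Q (Fin.last n).castSucc (Fin.last (n + 1)) := hsym _ _
  have hq : ⅟ (Q ((Fin.last n).castSucc) (Fin.last (n + 1))) *
      Q ((Fin.last n).castSucc) (Fin.last (n + 1)) = 1 := invOf_mul_self _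
  simp only [Fin.sum_univ_castSucc, h₁, h₂, mul_zero, e1, e2, e3, Finset.sum_add_distrib,
    add_zero]
  have ca : ∑ i : Fin n, z (Fin.last n).castSucc * z i.castSucc.castSucc *
        Q (Fin.last n).castSucc i.castSucc.castSucc
      = z (Fin.last n).castSucc * ∑ c : Fin n, Q (Fin.last n).castSucc c.castSucc.castSucc *
        z c.castSucc.castSucc := by
    rw [Finset.mul_sum]; exact Finset.sum_congr rfl fun i _ => by ring
  have cb : ∑ x : Fin n, z (Fin.last (n + 1)) * z x.castSucc.castSucc *
        Q x.castSucc.castSucc (Fin.last (n + 1))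
      = z (Fin.last (n + 1)) * ∑ b : Fin n, Q b.castSucc.castSucc (Fin.last (n + 1)) *
        z b.castSucc.castSucc := by
    rw [Finset.mul_sum]; exact Finset.sum_congr rfl fun i _ => by ring
  have cc : ∑ x : Fin n, z x.castSucc.castSucc * z (Fin.last n).castSucc *
        Q (Fin.last n).castSucc x.castSucc.castSucc
      = z (Fin.last n).castSucc * ∑ c : Fin n, Q (Fin.last n).castSucc c.castSucc.castSucc *
        z c.castSucc.castSucc := by
    rw [Finset.mul_sum]; exact Finset.sum_congr rfl fun i _ => by ring
  have cd : ∑ i : Fin n, z i.castSucc.castSucc * z (Fin.last (n + 1)) *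
        Q i.castSucc.castSucc (Fin.last (n + 1))
      = z (Fin.last (n + 1)) * ∑ b : Fin n, Q b.castSucc.castSucc (Fin.last (n + 1)) *
        z b.castSucc.castSucc := by
    rw [Finset.mul_sum]; exact Finset.sum_congr rfl fun i _ => by ring
  have hE : (∑ b : Fin n, ∑ c : Fin n, z b.castSucc.castSucc * z c.castSucc.castSucc *
        (Q b.castSucc.castSucc c.castSucc.castSucc -
          ⅟ (Q ((Fin.last n).castSucc) (Fin.last (n + 1))) *
            (Q b.castSucc.castSucc (Fin.last (n + 1)) *
              Q ((Fin.last n).castSucc) c.castSucc.castSucc +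
             Q ((Fin.last n).castSucc) b.castSucc.castSucc *
              Q c.castSucc.castSucc (Fin.last (n + 1)))))
      = (∑ b : Fin n, ∑ c : Fin n, z b.castSucc.castSucc * z c.castSucc.castSucc *
          Q b.castSucc.castSucc c.castSucc.castSucc)
        - ⅟ (Q ((Fin.last n).castSucc) (Fin.last (n + 1))) *
            ((∑ b : Fin n, Q b.castSucc.castSucc (Fin.last (n + 1)) * z b.castSucc.castSucc) *
             (∑ c : Fin n, Q ((Fin.last n).castSucc) c.castSucc.castSucc *
               z c.castSucc.castSucc))
        - ⅟ (Q ((Fin.last n).castSucc) (Fin.last (n + 1))) *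
            ((∑ b : Fin n, Q ((Fin.last n).castSucc) b.castSucc.castSucc * z b.castSucc.castSucc) *
             (∑ c : Fin n, Q c.castSucc.castSucc (Fin.last (n + 1)) *
               z c.castSucc.castSucc)) := by
    rw [Finset.sum_mul_sum, Finset.sum_mul_sum]
    simp only [Finset.mul_sum]
    rw [← Finset.sum_sub_distrib, ← Finset.sum_sub_distrib]
    refine Finset.sum_congr rfl fun b _ => ?_
    rw [← Finset.sum_sub_distrib, ← Finset.sum_sub_distrib]
    refine Finset.sum_congr rfl fun c _ => ?_
    ring
  linear_combination ca + cb + cc + cd - hE - 2 * z (Fin.last (n + 1)) *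
    (∑ b : Fin n, Q b.castSucc.castSucc (Fin.last (n + 1)) * z b.castSucc.castSucc) * hq
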